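/- arXiv:2205.09668 — 3 statements merged into one kernel-verified Lean document; each statement's English description precedes it below -/
import Mathlib

section
/- Let V be a finite set and let F be a family of subsets of V. Consider the simple graph on F in which two sets are adjacent if and only if their symmetric difference has exactly one element. If this graph is isomorphic to the hypercube Q_t for some integer t ≥ 0, then there exist sets S ⊆ T ⊆ V with |T \ S| = t such that F is exactly the interval {R : S ⊆ R ⊆ T} in the poset of subsets of V ordered by inclusion. -/
/-- The TAR (token addition/removal) graph of a predicate `P` on finite subsets of `V`:
vertices are the `P`-sets, two `P`-sets being adjacent iff their symmetric difference
has exactly one element. -/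
def tarGraph {V : Type*} [DecidableEq V] (P : Finset V → Prop) :
    SimpleGraph {S : Finset V // P S} where
  Adj S T := (symmDiff S.1 T.1).card = 1
  symm := by constructor; intro S T h; rwa [symmDiff_comm]
  loopless := by constructor; intro S h; simp [symmDiff_self] at h

/-- `S` is a minimal `P`-set: `S` is a `P`-set and no proper subset of `S` is a `P`-set. -/
def IsMinimalPSet {V : Type*} (P : Finset V → Prop) (S : Finset V) : Prop :=
  P S ∧ ∀ T : Finset V, T ⊂ S → ¬ P T

/-- `R` is `P`-irrelevant: no minimal `P`-set contains any vertex of `R`. -/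
def IsIrrelevant {V : Type*} (P : Finset V → Prop) (R : Finset V) : Prop :=
  ∀ S : Finset V, IsMinimalPSet P S → ∀ v ∈ R, v ∉ S

/-- The hypercube `Q_t`: vertices are `{0,1}^t`, two tuples adjacent iff they differ
in exactly one coordinate. -/
def hypercube (t : ℕ) : SimpleGraph (Fin t → Bool) where
  Adj x y := ∃! i : Fin t, x i ≠ y i
  symm := by
    constructor
    rintro x y ⟨i, hi, hu⟩
    exact ⟨i, hi.symm, fun j hj => hu j hj.symm⟩
  loopless := by constructor; rintro x ⟨i, hi, -⟩; exact hi rfl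

namespace IntervalHyp

variable {t : ℕ} {V : Type*} [DecidableEq V]

def flip (x : Fin t → Bool) (i : Fin t) : Fin t → Bool := Function.update x i (!x i)

lemma flip_apply (x : Fin t → Bool) (i j : Fin t) :
    flip x i j = if j = i then !x i else x j := Function.update_apply x i (!x i) j

lemma flip_self (x : Fin t → Bool) (i : Fin t) : flip x i i = !x i := by simp [flip_apply]

lemma flip_ne (x : Fin t → Bool) {i j : Fin t} (h : j ≠ i) : flip x i j = x j := by
  simp [flip_apply, h]

lemma flip_flip (x : Fin t → Bool) (i : Fin t) : flip (flip x i) i = x := by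
  funext j
  by_cases h : j = i
  · subst h; simp [flip_apply]
  · simp [flip_apply, h]

lemma flip_comm (x : Fin t → Bool) {i j : Fin t} (h : i ≠ j) :
    flip (flip x i) j = flip (flip x j) i := by
  funext k
  simp only [flip_apply]
  split_ifs <;> simp_all

lemma flip_flip_ne (x : Fin t → Bool) {i j : Fin t} (h : i ≠ j) :
    flip (flip x i) j ≠ x := by
  intro hc
  have := congrFun hc i
  rw [flip_ne _ h, flip_self] at this
  cases x i <;> simp at this

lemma flip_ne_flip (x : Fin t → Bool) {i j : Fin t} (h : i ≠ j) :
    flip x i ≠ flip x j := by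
  intro hc
  have := congrFun hc i
  rw [flip_self, flip_ne _ h] at this
  cases x i <;> simp at this

lemma hypercube_adj_flip (x : Fin t → Bool) (i : Fin t) : ∃! j, x j ≠ flip x i j := by
  refine ⟨i, ?_, fun j hj => ?_⟩
  · show x i ≠ flip x i i
    rw [flip_self]; cases x i <;> simp
  · by_contra hne
    exact hj (flip_ne x hne).symm

lemma symmDiff_cancel_left {A B C : Finset V} (h : symmDiff A B = symmDiff A C) : B = C := by
  have := congrArg (fun s => symmDiff A s) h
  simpa [symmDiff_symmDiff_cancel_left] using this

lemma symmDiff_singleton_insert {a : V} {s : Finset V} (h : a ∉ s) :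
    symmDiff s {a} = insert a s := by
  ext r
  simp only [Finset.mem_symmDiff, Finset.mem_singleton, Finset.mem_insert]
  constructor
  · rintro (⟨hr, -⟩ | ⟨rfl, -⟩) <;> tauto
  · rintro (rfl | hr)
    · exact Or.inr ⟨rfl, h⟩
    · exact Or.inl ⟨hr, fun hra => h (hra ▸ hr)⟩

theorem main_aux (f : (Fin t → Bool) → Finset V)
    (hinj : Function.Injective f)
    (hadj : ∀ (x : Fin t → Bool) (i : Fin t), ∃ a, symmDiff (f x) (f (flip x i)) = {a}) :
    ∃ v : Fin t → V, Function.Injective v ∧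
      ∀ x, f x = symmDiff (f (fun _ => false))
        ((Finset.univ.filter fun i => x i = true).image v) := by
  choose e he using hadj
  have hstep : ∀ x i, f (flip x i) = symmDiff (f x) {e x i} := fun x i => by
    rw [← he x i, symmDiff_symmDiff_cancel_left]
  have hsame : ∀ x i, e (flip x i) i = e x i := by
    intro x i
    have h1 := he (flip x i) i
    rw [flip_flip, symmDiff_comm, he x i] at h1
    exact (Finset.singleton_injective h1).symm
  have hcross : ∀ (x : Fin t → Bool) (i j : Fin t), i ≠ j → e (flip x j) i = e x i := by
    intro x i j hij
    set a := e x i with ha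
    set b := e (flip x i) j with hb
    set c := e x j with hc
    set d := e (flip x j) i with hd
    have h1 : f (flip (flip x i) j) = symmDiff (f x) (symmDiff {a} {b}) := by
      rw [hstep, hstep, symmDiff_assoc]
    have h2 : f (flip (flip x j) i) = symmDiff (f x) (symmDiff {c} {d}) := by
      rw [hstep, hstep, symmDiff_assoc]
    rw [flip_comm x hij, h2] at h1
    have h12 : symmDiff ({c} : Finset V) {d} = symmDiff {a} {b} := symmDiff_cancel_left h1
    have hab : a ≠ b := by
      intro hab
      apply flip_flip_ne x hij
      apply hinj
      rw [flip_comm x hij, h2, h12, hab, symmDiff_self, symmDiff_bot]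
    have hamem : a ∈ symmDiff ({a} : Finset V) {b} := by
      rw [Finset.mem_symmDiff]
      exact Or.inl ⟨Finset.mem_singleton_self a, by simpa using hab⟩
    rw [← h12, Finset.mem_symmDiff] at hamem
    simp only [Finset.mem_singleton] at hamem
    rcases hamem with ⟨hac, -⟩ | ⟨had, -⟩
    · exfalso
      apply flip_ne_flip x hij
      apply hinj
      rw [hstep, hstep, ← ha, ← hc, hac]
    · exact had.symm
  -- constancy of e in x
  have hconst : ∀ (n : ℕ) (x : Fin t → Bool) (i : Fin t),
      (Finset.univ.filter fun j => x j = true).card = n →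
      e x i = e (fun _ => false) i := by
    intro n
    induction n with
    | zero =>
      intro x i hx
      have hx0 : x = fun _ => false := by
        funext j
        have hjm : j ∉ Finset.univ.filter fun k => x k = true := by
          rw [Finset.card_eq_zero.mp hx]; exact Finset.notMem_empty j
        simpa using hjm
      rw [hx0]
    | succ n ih =>
      intro x i hx
      have hne : (Finset.univ.filter fun j => x j = true).Nonempty := by
        rw [← Finset.card_pos, hx]; omega
      obtain ⟨j, hj⟩ := hne
      have hxj : x j = true := (Finset.mem_filter.mp hj).2
      have hcard : (Finset.univ.filter fun k => flip x j k = true).card = n := by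
        have hset : (Finset.univ.filter fun k => flip x j k = true)
            = (Finset.univ.filter fun k => x k = true).erase j := by
          ext k
          simp only [Finset.mem_filter, Finset.mem_erase, Finset.mem_univ, true_and,
            flip_apply]
          by_cases hk : k = j <;> simp [hk, hxj]
        rw [hset, Finset.card_erase_of_mem hj, hx]
        omega
      have hih := ih (flip x j) i hcard
      rcases eq_or_ne i j with rfl | hij
      · rw [← hsame x i]; exact hih
      · rw [← hcross x i j hij]; exact hih
  set v : Fin t → V := fun i => e (fun _ => false) i with hv
  have hev : ∀ x i, e x i = v i := fun x i => hconst _ x i rfl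
  have hvinj : Function.Injective v := by
    intro i j hvij
    by_contra hij
    apply flip_ne_flip (fun _ => false) hij
    apply hinj
    rw [hstep, hstep, hev, hev, hvij]
  refine ⟨v, hvinj, ?_⟩
  have hformula : ∀ (n : ℕ) (x : Fin t → Bool),
      (Finset.univ.filter fun i => x i = true).card = n →
      f x = symmDiff (f (fun _ => false))
        ((Finset.univ.filter fun i => x i = true).image v) := by
    intro n
    induction n with
    | zero =>
      intro x hx
      have hx0 : x = fun _ => false := by
        funext j
        have hjm : j ∉ Finset.univ.filter fun k => x k = true := by
          rw [Finset.card_eq_zero.mp hx]; exact Finset.notMem_empty j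
        simpa using hjm
      subst hx0
      simpa using (symmDiff_bot (f fun _ => false)).symm
    | succ n ih =>
      intro x hx
      have hne : (Finset.univ.filter fun j => x j = true).Nonempty := by
        rw [← Finset.card_pos, hx]; omega
      obtain ⟨j, hj⟩ := hne
      have hxj : x j = true := (Finset.mem_filter.mp hj).2
      set x' := flip x j with hx'
      have hxx' : x = flip x' j := (flip_flip x j).symm
      have hset : (Finset.univ.filter fun k => x' k = true)
          = (Finset.univ.filter fun k => x k = true).erase j := by
        ext k
        simp only [Finset.mem_filter, Finset.mem_erase, Finset.mem_univ, true_and, hx',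
          flip_apply]
        by_cases hk : k = j <;> simp [hk, hxj]
      have hcard : (Finset.univ.filter fun k => x' k = true).card = n := by
        rw [hset, Finset.card_erase_of_mem hj, hx]
        omega
      have hih := ih x' hcard
      have hjnot : j ∉ (Finset.univ.filter fun k => x' k = true) := by
        rw [hset]; exact Finset.notMem_erase j _
      have hvj : v j ∉ (Finset.univ.filter fun k => x' k = true).image v := by
        intro hmem
        obtain ⟨k, hk, hvk⟩ := Finset.mem_image.mp hmem
        exact hjnot (hvinj hvk ▸ hk)
      have himg : (Finset.univ.filter fun k => x k = true).image v
          = insert (v j) ((Finset.univ.filter fun k => x' k = true).image v) := by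
        have : (Finset.univ.filter fun k => x k = true)
            = insert j (Finset.univ.filter fun k => x' k = true) := by
          rw [hset, Finset.insert_erase hj]
        rw [this, Finset.image_insert]
      calc f x = f (flip x' j) := by rw [← hxx']
        _ = symmDiff (f x') {v j} := by rw [hstep, hev]
        _ = symmDiff (symmDiff (f fun _ => false)
              ((Finset.univ.filter fun k => x' k = true).image v)) {v j} := by rw [hih]
        _ = symmDiff (f fun _ => false)
              (symmDiff ((Finset.univ.filter fun k => x' k = true).image v) {v j}) :=
            symmDiff_assoc _ _ _
        _ = symmDiff (f fun _ => false)
              (insert (v j) ((Finset.univ.filter fun k => x' k = true).image v)) := by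
            rw [symmDiff_singleton_insert hvj]
        _ = symmDiff (f fun _ => false)
              ((Finset.univ.filter fun k => x k = true).image v) := by rw [himg]
  intro x
  exact hformula _ x rfl

end IntervalHyp

open IntervalHyp

/-- If the graph on a family `F` of subsets of a finite set `V`, with two sets adjacent
iff their symmetric difference has exactly one element, is isomorphic to the hypercube
`Q_t`, then `F` is an interval `{R : S ⊆ R ⊆ T}` with `|T \ S| = t` in the subset poset. -/
theorem interval_of_iso_hypercube {V : Type*} [Fintype V] [DecidableEq V]
    (F : Set (Finset V)) (t : ℕ)
    (h : Nonempty (tarGraph (· ∈ F) ≃g hypercube t)) :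
    ∃ S T : Finset V, S ⊆ T ∧ (T \ S).card = t ∧
      F = {R : Finset V | S ⊆ R ∧ R ⊆ T} := by
  obtain ⟨φ⟩ := h
  set f : (Fin t → Bool) → Finset V := fun x => (φ.symm x).1 with hf
  have hinj : Function.Injective f := fun x y hxy =>
    φ.symm.injective (Subtype.ext hxy)
  have hadj : ∀ (x : Fin t → Bool) (i : Fin t),
      ∃ a, symmDiff (f x) (f (flip x i)) = {a} := by
    intro x i
    have hadj' : (tarGraph (· ∈ F)).Adj (φ.symm x) (φ.symm (flip x i)) :=
      φ.symm.map_adj_iff.mpr (hypercube_adj_flip x i)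
    exact Finset.card_eq_one.mp hadj'
  obtain ⟨v, hvinj, hform⟩ := main_aux f hinj hadj
  have hF : F = Set.range f := by
    ext S
    constructor
    · intro hS
      exact ⟨φ ⟨S, hS⟩, by simp [hf]⟩
    · rintro ⟨x, rfl⟩
      exact (φ.symm x).2
  set A : Finset V := f (fun _ => false) with hA
  set W : Finset V := Finset.univ.image v with hW
  have hWcard : W.card = t := by
    rw [hW, Finset.card_image_of_injective _ hvinj, Finset.card_univ, Fintype.card_fin]
  refine ⟨A \ W, A ∪ W, (Finset.sdiff_subset).trans Finset.subset_union_left, ?_, ?_⟩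
  · have : (A ∪ W) \ (A \ W) = W := by
      ext r
      simp only [Finset.mem_sdiff, Finset.mem_union]
      tauto
    rw [this, hWcard]
  · rw [hF]
    ext R
    simp only [Set.mem_range, Set.mem_setOf_eq]
    constructor
    · rintro ⟨x, rfl⟩
      rw [hform x]
      set B : Finset V := (Finset.univ.filter fun i => x i = true).image v with hB
      have hBW : B ⊆ W := by
        rw [hB, hW]
        exact Finset.image_subset_image (Finset.subset_univ _)
      constructor
      · intro r hr
        rw [Finset.mem_sdiff] at hr
        rw [Finset.mem_symmDiff]
        exact Or.inl ⟨hr.1, fun hrB => hr.2 (hBW hrB)⟩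
      · intro r hr
        rw [Finset.mem_symmDiff] at hr
        rw [Finset.mem_union]
        rcases hr with ⟨hrA, -⟩ | ⟨hrB, -⟩
        · exact Or.inl hrA
        · exact Or.inr (hBW hrB)
    · rintro ⟨hSR, hRT⟩
      set B : Finset V := symmDiff A R with hB
      have hBW : B ⊆ W := by
        intro r hr
        rw [hB, Finset.mem_symmDiff] at hr
        rcases hr with ⟨hrA, hrR⟩ | ⟨hrR, hrA⟩
        · by_contra hrW
          exact hrR (hSR (Finset.mem_sdiff.mpr ⟨hrA, hrW⟩))
        · rcases Finset.mem_union.mp (hRT hrR) with h1 | h1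
          · exact absurd h1 hrA
          · exact h1
      refine ⟨fun i => decide (v i ∈ B), ?_⟩
      rw [hform]
      have himg : (Finset.univ.filter fun i => decide (v i ∈ B) = true).image v = B := by
        ext r
        simp only [Finset.mem_image, Finset.mem_filter, Finset.mem_univ, true_and,
          decide_eq_true_eq]
        constructor
        · rintro ⟨i, hi, rfl⟩
          exact hi
        · intro hr
          obtain ⟨i, -, hvi⟩ := Finset.mem_image.mp (hBW hr)
          exact ⟨i, hvi ▸ hr, hvi⟩
      rw [himg, hB, symmDiff_symmDiff_cancel_left]
end

section
/- Let V be a finite type and let P be a superset-closed predicate on finite subsets of V. Let k be an integer such that every minimal P-set of V has cardinality strictly less than k. If the k-th TAR graph TAR_k(P) (the induced subgraph of the P-TAR graph on P-sets of cardinality at most k) is connected, then TAR_{k'}(P) is connected for every integer k' ≥ k. -/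
/-- The `k`-TAR graph: the induced subgraph of the TAR graph of `P` on the
`P`-sets of cardinality at most `k`. -/
def tarGraphLe {V : Type*} [DecidableEq V] (P : Finset V → Prop) (k : ℕ) :
    SimpleGraph {S : Finset V // P S ∧ S.card ≤ k} where
  Adj S T := (symmDiff S.1 T.1).card = 1
  symm := by constructor; intro S T h; rwa [symmDiff_comm]
  loopless := by constructor; intro S h; simp [symmDiff_self] at h

lemma exists_minimal_subset {V : Type*} [DecidableEq V] (P : Finset V → Prop) :
    ∀ S : Finset V, P S → ∃ M, M ⊆ S ∧ IsMinimalPSet P M := by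
  intro S
  induction S using Finset.strongInductionOn with
  | _ S ih =>
    intro hS
    by_cases h : ∃ T, T ⊂ S ∧ P T
    · obtain ⟨T, hT, hPT⟩ := h
      obtain ⟨M, hM, hmin⟩ := ih T hT hPT
      exact ⟨M, hM.trans hT.subset, hmin⟩
    · exact ⟨S, subset_rfl, hS, fun T hT hPT => h ⟨T, hT, hPT⟩⟩

/-- Let `P` be superset-closed and `k` an integer such that every minimal `P`-set has
cardinality strictly less than `k`. If `TAR_k(P)` is connected, then `TAR_{k'}(P)` is
connected for every `k' ≥ k`. -/
theorem tarGraphLe_connected_of_connected {V : Type*} [Fintype V] [DecidableEq V]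
    (P : Finset V → Prop)
    (hP : ∀ S T : Finset V, P S → S ⊆ T → P T)
    (k : ℕ)
    (hmin : ∀ S : Finset V, IsMinimalPSet P S → S.card < k)
    (hconn : (tarGraphLe P k).Connected) :
    ∀ k' : ℕ, k ≤ k' → (tarGraphLe P k').Connected := by
  intro k' hk'
  induction k', hk' using Nat.le_induction with
  | base => exact hconn
  | succ n hn ih =>
    -- hom from level n to level n+1
    let f : tarGraphLe P n →g tarGraphLe P (n + 1) :=
      ⟨fun S => ⟨S.1, S.2.1, S.2.2.trans n.le_succ⟩, fun h => h⟩
    -- every vertex at level n+1 is reachable from the image of a level-n vertex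
    have key : ∀ S : {S : Finset V // P S ∧ S.card ≤ n + 1},
        ∃ S' : {S : Finset V // P S ∧ S.card ≤ n},
          (tarGraphLe P (n + 1)).Reachable S (f S') := by
      intro ⟨S, hS, hcard⟩
      rcases Nat.lt_or_ge S.card (n + 1) with hlt | hge
      · exact ⟨⟨S, hS, Nat.lt_succ_iff.mp hlt⟩, SimpleGraph.Reachable.refl _⟩
      · -- S.card = n + 1 ≥ k, so S strictly contains a minimal P-set
        obtain ⟨M, hMS, hMmin⟩ := exists_minimal_subset P S hS
        have hMlt : M.card < S.card := lt_of_lt_of_le (hmin M hMmin)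
          (le_trans (hn.trans n.le_succ) hge)
        have hssub : M ⊂ S := hMS.ssubset_of_ne
          (by rintro rfl; exact lt_irrefl _ hMlt)
        obtain ⟨v, hvS, hvM⟩ := Finset.exists_of_ssubset hssub
        have hMe : M ⊆ S.erase v := fun x hx =>
          Finset.mem_erase.mpr ⟨fun h => hvM (h ▸ hx), hMS hx⟩
        have hPe : P (S.erase v) := hP M _ hMmin.1 hMe
        have hce : (S.erase v).card ≤ n := by
          have := Finset.card_erase_of_mem hvS
          omega
        refine ⟨⟨S.erase v, hPe, hce⟩, SimpleGraph.Adj.reachable ?_⟩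
        show (symmDiff S (S.erase v)).card = 1
        have : symmDiff S (S.erase v) = {v} := by
          ext x
          rw [Finset.mem_symmDiff]
          simp only [Finset.mem_erase, Finset.mem_singleton]
          constructor
          · rintro (⟨hx, h⟩ | ⟨⟨_, h⟩, h'⟩)
            · by_contra hne; exact h ⟨hne, hx⟩
            · exact absurd h h'
          · rintro rfl; exact Or.inl ⟨hvS, fun h => h.1 rfl⟩
        rw [this, Finset.card_singleton]
    have hpre : (tarGraphLe P (n + 1)).Preconnected := by
      intro S T
      obtain ⟨S', hS'⟩ := key S
      obtain ⟨T', hT'⟩ := key T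
      exact hS'.trans (((ih.preconnected S' T').map f).trans hT'.symm)
    obtain ⟨⟨S, hS, hc⟩⟩ := ih.nonempty
    haveI : Nonempty {S : Finset V // P S ∧ S.card ≤ n + 1} :=
      ⟨⟨S, hS, hc.trans n.le_succ⟩⟩
    exact ⟨hpre⟩
end

section
/- Let G be a simple graph on n ≥ 2 vertices with no isolated vertices. If the zero forcing TAR graph of G is isomorphic to the zero forcing TAR graph of the path P_n, then G is isomorphic to P_n. -/
/-- A set `B` is forcing-closed in `G` if no vertex of `B` has exactly one neighbor
outside `B` (i.e. no force can be performed from `B`). The zero forcing closure of `S`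
is the smallest forcing-closed set containing `S`. -/
def ZFClosed {V : Type*} (G : SimpleGraph V) (B : Finset V) : Prop :=
  ∀ v ∈ B, ¬ ∃! w : V, G.Adj v w ∧ w ∉ B

/-- `S` is a zero forcing set of `G`: the zero forcing closure of `S` is all of `V`,
equivalently every forcing-closed set containing `S` is all of `V`. -/
def IsZeroForcingSet {V : Type*} [Fintype V] (G : SimpleGraph V) (S : Finset V) : Prop :=
  ∀ B : Finset V, S ⊆ B → ZFClosed G B → B = Finset.univ

section Aux

variable {V : Type*} [DecidableEq V]

lemma zfs_mono [Fintype V] {G : SimpleGraph V} {S T : Finset V}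
    (h : IsZeroForcingSet G S) (hst : S ⊆ T) : IsZeroForcingSet G T :=
  fun B hTB hB => h B (hst.trans hTB) hB

lemma univ_zfs [Fintype V] (G : SimpleGraph V) : IsZeroForcingSet G Finset.univ :=
  fun B hB _ => Finset.univ_subset_iff.mp hB

lemma zfs_nonempty [Fintype V] [Nonempty V] {G : SimpleGraph V} {S : Finset V}
    (h : IsZeroForcingSet G S) : S.Nonempty := by
  rcases S.eq_empty_or_nonempty with rfl | h'
  · have h0 : (∅ : Finset V) = Finset.univ :=
      h ∅ le_rfl (fun v hv => by simp at hv)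
    exact absurd h0.symm (Finset.univ_nonempty).ne_empty
  · exact h'

/-- Lower bound: any walk in a TAR graph has length at least the size of the
symmetric difference of its endpoints. -/
lemma tar_symmDiff_card_le_walk_length {P : Finset V → Prop} {S T : {S : Finset V // P S}}
    (w : (tarGraph P).Walk S T) : (symmDiff S.1 T.1).card ≤ w.length := by
  induction w with
  | nil => simp [symmDiff_self]
  | @cons a b c h p ih =>
    have hsub : symmDiff a.1 c.1 ⊆ symmDiff a.1 b.1 ∪ symmDiff b.1 c.1 := by
      intro x hx
      simp only [Finset.mem_union, Finset.mem_symmDiff] at hx ⊢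
      tauto
    have h1 : (symmDiff a.1 b.1).card = 1 := h
    calc (symmDiff a.1 c.1).card
        ≤ (symmDiff a.1 b.1 ∪ symmDiff b.1 c.1).card := Finset.card_le_card hsub
      _ ≤ (symmDiff a.1 b.1).card + (symmDiff b.1 c.1).card := Finset.card_union_le _ _
      _ ≤ 1 + p.length := by rw [h1]; exact Nat.add_le_add_left ih 1
      _ = (SimpleGraph.Walk.cons h p).length := by
          simp [SimpleGraph.Walk.length_cons]; omega

/-- Upper bound: in the TAR graph of an upward-closed predicate, any two vertices
are joined by a walk whose length is the size of the symmetric difference. -/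
lemma tar_exists_walk {P : Finset V → Prop}
    (hup : ∀ ⦃A B : Finset V⦄, P A → A ⊆ B → P B) :
    ∀ (m : ℕ) (S T : {S : Finset V // P S}), (symmDiff S.1 T.1).card = m →
      ∃ w : (tarGraph P).Walk S T, w.length = m := by
  intro m
  induction m with
  | zero =>
    intro S T hST
    have h0 : symmDiff S.1 T.1 = ⊥ := Finset.card_eq_zero.mp hST
    have : S = T := Subtype.ext (symmDiff_eq_bot.mp h0)
    subst this
    exact ⟨SimpleGraph.Walk.nil, rfl⟩
  | succ m ih =>
    intro S T hST
    by_cases hTS : (T.1 \ S.1).Nonempty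
    · obtain ⟨x, hx⟩ := hTS
      have hxT : x ∈ T.1 := (Finset.mem_sdiff.mp hx).1
      have hxS : x ∉ S.1 := (Finset.mem_sdiff.mp hx).2
      refine ?_
      set S' : {S : Finset V // P S} :=
        ⟨insert x S.1, hup S.2 (Finset.subset_insert x S.1)⟩ with hS'
      have hadj : (tarGraph P).Adj S S' := by
        show (symmDiff S.1 (insert x S.1)).card = 1
        have he : symmDiff S.1 (insert x S.1) = {x} := by
          ext y
          simp only [Finset.mem_symmDiff, Finset.mem_insert, Finset.mem_singleton]
          by_cases hyx : y = x
          · subst hyx; tauto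
          · tauto
        rw [he, Finset.card_singleton]
      have hcard : (symmDiff S'.1 T.1).card = m := by
        have he : symmDiff S'.1 T.1 = (symmDiff S.1 T.1).erase x := by
          ext y
          simp only [hS', Finset.mem_symmDiff, Finset.mem_insert, Finset.mem_erase]
          by_cases hyx : y = x
          · subst hyx; tauto
          · tauto
        rw [he, Finset.card_erase_of_mem (by
          simp only [Finset.mem_symmDiff]; tauto), hST]
        omega
      obtain ⟨w, hw⟩ := ih S' T hcard
      exact ⟨SimpleGraph.Walk.cons hadj w, by simp [hw]⟩
    · have hsub : T.1 ⊆ S.1 := by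
        rw [← Finset.sdiff_eq_empty_iff_subset]
        exact Finset.not_nonempty_iff_eq_empty.mp hTS
      have hsd : symmDiff S.1 T.1 = S.1 \ T.1 := by
        ext y
        simp only [Finset.mem_symmDiff, Finset.mem_sdiff]
        have hy := @hsub y
        tauto
      have hne : (S.1 \ T.1).Nonempty := by
        rw [← hsd]
        exact Finset.card_pos.mp (by omega)
      obtain ⟨x, hx⟩ := hne
      have hxS : x ∈ S.1 := (Finset.mem_sdiff.mp hx).1
      have hxT : x ∉ T.1 := (Finset.mem_sdiff.mp hx).2
      set S' : {S : Finset V // P S} :=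
        ⟨S.1.erase x, hup T.2 (Finset.subset_erase.mpr ⟨hsub, hxT⟩)⟩ with hS'
      have hadj : (tarGraph P).Adj S S' := by
        show (symmDiff S.1 (S.1.erase x)).card = 1
        have he : symmDiff S.1 (S.1.erase x) = {x} := by
          ext y
          simp only [Finset.mem_symmDiff, Finset.mem_erase, Finset.mem_singleton]
          by_cases hyx : y = x
          · subst hyx; tauto
          · tauto
        rw [he, Finset.card_singleton]
      have hcard : (symmDiff S'.1 T.1).card = m := by
        have he : symmDiff S'.1 T.1 = (symmDiff S.1 T.1).erase x := by
          ext y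
          simp only [hS', Finset.mem_symmDiff, Finset.mem_erase]
          by_cases hyx : y = x
          · subst hyx; tauto
          · tauto
        rw [he, Finset.card_erase_of_mem (by
          simp only [Finset.mem_symmDiff]; tauto), hST]
        omega
      obtain ⟨w, hw⟩ := ih S' T hcard
      exact ⟨SimpleGraph.Walk.cons hadj w, by simp [hw]⟩

/-- `{0}` is a zero forcing set of the path. -/
lemma path_zero_zfs (n : ℕ) (hn : 0 < n) :
    IsZeroForcingSet (SimpleGraph.pathGraph n) {(⟨0, hn⟩ : Fin n)} := by
  intro B hB hcl
  have key : ∀ m : ℕ, ∀ hm : m < n, (⟨m, hm⟩ : Fin n) ∈ B := by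
    intro m
    induction m using Nat.strong_induction_on with
    | _ m ih =>
      intro hm
      rcases Nat.eq_zero_or_pos m with rfl | hmpos
      · exact hB (Finset.mem_singleton_self _)
      · obtain ⟨m', rfl⟩ := Nat.exists_eq_succ_of_ne_zero (Nat.pos_iff_ne_zero.mp hmpos)
        have hm' : m' < n := by omega
        have hprev : (⟨m', hm'⟩ : Fin n) ∈ B := ih m' (by omega) hm'
        by_contra hmB
        apply hcl _ hprev
        refine ⟨⟨m' + 1, hm⟩, ⟨?_, hmB⟩, ?_⟩
        · rw [SimpleGraph.pathGraph_adj]; left; rfl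
        · rintro w ⟨hadj, hwB⟩
          rw [SimpleGraph.pathGraph_adj] at hadj
          rcases hadj with h1 | h2
          · have h1' : (w : ℕ) = m' + 1 := h1.symm
            exact Fin.ext h1'
          · exfalso
            apply hwB
            have h2' : (w : ℕ) + 1 = m' := h2
            have h3 := ih w.val (by omega) w.isLt
            simpa using h3
  rw [Finset.eq_univ_iff_forall]
  intro x
  have := key x.val x.isLt
  simpa using this

end Aux

section Chain

variable {W : Type*} [Fintype W] [DecidableEq W]

/-- If `{v}` is a zero forcing set, we can grow a "forcing chain" list starting from `v`
that induces a path and whose non-terminal vertices have no neighbors outside the list. -/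
lemma zfs_chain (G : SimpleGraph W) (v : W) (hv : IsZeroForcingSet G {v}) (k : ℕ) :
    ∃ l : List W, l.Nodup ∧ v ∈ l ∧
      (l.length = k + 1 ∨ l.toFinset = Finset.univ) ∧
      (∀ (i j : ℕ) (hi : i < l.length) (hj : j < l.length),
        G.Adj (l[i]'hi) (l[j]'hj) ↔ (i + 1 = j ∨ j + 1 = i)) ∧
      (∀ (i : ℕ) (hi : i + 1 < l.length) (u : W), u ∉ l →
        ¬ G.Adj (l[i]'(by omega)) u) := by
  induction k with
  | zero =>
    refine ⟨[v], List.nodup_singleton v, List.mem_singleton_self v, Or.inl rfl, ?_, ?_⟩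
    · intro i j hi hj
      simp only [List.length_singleton] at hi hj
      have hi0 : i = 0 := by omega
      have hj0 : j = 0 := by omega
      subst hi0; subst hj0
      simp only [List.getElem_cons_zero]
      exact ⟨fun h => absurd h (G.irrefl), fun h => by omega⟩
    · intro i hi
      simp only [List.length_singleton] at hi
      omega
  | succ k ih =>
    obtain ⟨l, hnd, hvl, hlen, hadj, hlast⟩ := ih
    by_cases huniv : l.toFinset = Finset.univ
    · exact ⟨l, hnd, hvl, Or.inr huniv, hadj, hlast⟩
    · have hlen' : l.length = k + 1 := hlen.resolve_right huniv
      have hsub : ({v} : Finset W) ⊆ l.toFinset := by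
        simp only [Finset.singleton_subset_iff, List.mem_toFinset]
        exact hvl
      have hncl : ¬ ZFClosed G l.toFinset := fun hcl => huniv (hv _ hsub hcl)
      rw [ZFClosed] at hncl
      push_neg at hncl
      obtain ⟨x, hxB, hex⟩ := hncl
      obtain ⟨u, ⟨hadjxu, huB⟩, huniq⟩ := hex
      obtain ⟨i0, hi0, hxi0⟩ := List.mem_iff_getElem.mp (List.mem_toFinset.mp hxB)
      have hulnot : u ∉ l := fun hu => huB (List.mem_toFinset.mpr hu)
      have hi0last : i0 + 1 = l.length := by
        by_contra hne
        have h2 : i0 + 1 < l.length := by omega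
        exact hlast i0 h2 u hulnot (by rwa [hxi0])
      refine ⟨l ++ [u], ?_, List.mem_append_left _ hvl, ?_, ?_, ?_⟩
      · refine List.Nodup.append hnd (List.nodup_singleton u) ?_
        intro a ha hb
        rw [List.mem_singleton] at hb
        subst hb
        exact hulnot ha
      · left
        simp [hlen']
      · intro i j hi hj
        simp only [List.length_append, List.length_singleton] at hi hj
        rcases Nat.lt_or_ge i l.length with hiL | hiL
        · rcases Nat.lt_or_ge j l.length with hjL | hjL
          · rw [List.getElem_append_left hiL, List.getElem_append_left hjL]
            exact hadj i j hiL hjL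
          · have hjeq : j = l.length := by omega
            subst hjeq
            rw [List.getElem_append_left hiL, List.getElem_append_right (le_refl _)]
            simp only [Nat.sub_self, List.getElem_cons_zero]
            constructor
            · intro hA
              by_contra hC
              push_neg at hC
              have h3 : i + 1 < l.length := by omega
              exact hlast i h3 u hulnot hA
            · rintro (h1 | h2)
              · have h4 : i = i0 := by omega
                subst h4
                rwa [hxi0]
              · exact absurd h2 (by omega)
        · have hieq : i = l.length := by omega
          subst hieq
          rcases Nat.lt_or_ge j l.length with hjL | hjL
          · rw [List.getElem_append_right (le_refl _), List.getElem_append_left hjL]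
            simp only [Nat.sub_self, List.getElem_cons_zero]
            rw [G.adj_comm]
            constructor
            · intro hA
              by_contra hC
              push_neg at hC
              have h3 : j + 1 < l.length := by omega
              exact hlast j h3 u hulnot hA
            · rintro (h1 | h2)
              · exact absurd h1 (by omega)
              · have h4 : j = i0 := by omega
                subst h4
                rwa [hxi0]
          · have hjeq : j = l.length := by omega
            subst hjeq
            rw [List.getElem_append_right (le_refl _)]
            simp only [Nat.sub_self, List.getElem_cons_zero]
            exact ⟨fun hA => absurd hA (G.irrefl), fun h => absurd h (by omega)⟩
      · intro i hi u' hu' hAdj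
        simp only [List.length_append, List.length_singleton] at hi
        have hu'l : u' ∉ l := fun hm => hu' (List.mem_append_left _ hm)
        have hu'u : u' ≠ u := fun he => hu' (by
          rw [he]; exact List.mem_append_right _ (List.mem_singleton_self u))
        have hiL : i < l.length := by omega
        rw [List.getElem_append_left hiL] at hAdj
        rcases Nat.lt_or_ge (i + 1) l.length with hlt | hge
        · exact hlast i hlt u' hu'l hAdj
        · have h4 : i = i0 := by omega
          subst h4
          have hx' : G.Adj x u' := by rwa [hxi0] at hAdj
          exact hu'u (huniq u' ⟨hx', fun hmem => hu'l (List.mem_toFinset.mp hmem)⟩)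

/-- A graph with a singleton zero forcing set is a path. -/
lemma path_of_singleton_zfs (G : SimpleGraph W) (n : ℕ) (hcard : Fintype.card W = n)
    (v : W) (hv : IsZeroForcingSet G {v}) :
    Nonempty (G ≃g SimpleGraph.pathGraph n) := by
  rcases Nat.eq_zero_or_pos n with rfl | hn0
  · exact absurd hcard (by
      have : 0 < Fintype.card W := Fintype.card_pos_iff.mpr ⟨v⟩
      omega)
  obtain ⟨l, hnd, hvl, hlen, hadj, -⟩ := zfs_chain G v hv (n - 1)
  have hlength : l.length = n := by
    rcases hlen with h | h
    · omega
    · have h2 := List.toFinset_card_of_nodup hnd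
      rw [h, Finset.card_univ, hcard] at h2
      omega
  set f : Fin n → W := fun i => l[(i : ℕ)]'(by rw [hlength]; exact i.isLt) with hf
  have hinj : Function.Injective f := by
    intro a b hab
    exact Fin.ext ((List.Nodup.getElem_inj_iff hnd).mp hab)
  have hbij : Function.Bijective f :=
    (Fintype.bijective_iff_injective_and_card f).mpr ⟨hinj, by simp [hcard]⟩
  refine ⟨SimpleGraph.Iso.symm ⟨Equiv.ofBijective f hbij, ?_⟩⟩
  intro a b
  show G.Adj (f a) (f b) ↔ (SimpleGraph.pathGraph n).Adj a b
  rw [SimpleGraph.pathGraph_adj]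
  exact hadj a b (by rw [hlength]; exact a.isLt) (by rw [hlength]; exact b.isLt)

end Chain

/-- If `G` is a graph on `n ≥ 2` vertices with no isolated vertices whose zero forcing
TAR graph is isomorphic to that of the path `P_n`, then `G ≅ P_n`. -/
theorem eq_path_of_zTar_iso_path {W : Type*} [Fintype W] [DecidableEq W]
    (G : SimpleGraph W) (n : ℕ) (hn : 2 ≤ n) (hcard : Fintype.card W = n)
    (hnoiso : ∀ v : W, ∃ w : W, G.Adj v w)
    (h : Nonempty
      (tarGraph (IsZeroForcingSet G)
        ≃g tarGraph (IsZeroForcingSet (SimpleGraph.pathGraph n)))) :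
    Nonempty (G ≃g SimpleGraph.pathGraph n) := by
  classical
  obtain ⟨φ⟩ := h
  have hn0 : 0 < n := by omega
  have hW : Nonempty W := by
    rw [← Fintype.card_pos_iff, hcard]; omega
  set z0 : Fin n := ⟨0, hn0⟩ with hz0def
  have hz0 : IsZeroForcingSet (SimpleGraph.pathGraph n) {z0} := path_zero_zfs n hn0
  set VW : {S : Finset W // IsZeroForcingSet G S} := ⟨Finset.univ, univ_zfs G⟩ with hVW
  set A : Finset (Fin n) := (φ VW).1 with hA
  have htZ : IsZeroForcingSet (SimpleGraph.pathGraph n) (Aᶜ ∪ {z0}) := by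
    refine zfs_mono hz0 ?_
    intro y hy
    rw [Finset.mem_singleton] at hy
    subst hy
    exact Finset.mem_union_right _ (Finset.mem_singleton_self _)
  set t : {S : Finset (Fin n) // IsZeroForcingSet (SimpleGraph.pathGraph n) S} :=
    ⟨Aᶜ ∪ {z0}, htZ⟩ with ht
  set S : {S : Finset W // IsZeroForcingSet G S} := φ.symm t with hS
  -- walk from S to VW of length |S △ univ|
  obtain ⟨w, hw⟩ := tar_exists_walk (fun A B hA hAB => zfs_mono hA hAB)
    (symmDiff S.1 VW.1).card S VW rfl
  have hmap : (symmDiff (φ S).1 (φ VW).1).card ≤ (symmDiff S.1 VW.1).card := by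
    have h2 := tar_symmDiff_card_le_walk_length (w.map φ.toHom)
    rwa [SimpleGraph.Walk.length_map, hw] at h2
  have hφS : φ S = t := φ.apply_symm_apply t
  have hlow : n - 1 ≤ (symmDiff t.1 A).card := by
    have hsub : Finset.univ.erase z0 ⊆ symmDiff t.1 A := by
      intro x hx
      obtain ⟨hxz, -⟩ := Finset.mem_erase.mp hx
      rw [Finset.mem_symmDiff]
      by_cases hxA : x ∈ A
      · right
        refine ⟨hxA, ?_⟩
        simp only [ht, Finset.mem_union, Finset.mem_compl, Finset.mem_singleton]
        push_neg
        exact ⟨hxA, hxz⟩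
      · left
        exact ⟨Finset.mem_union_left _ (Finset.mem_compl.mpr hxA), hxA⟩
    calc n - 1 = (Finset.univ.erase z0).card := by
          rw [Finset.card_erase_of_mem (Finset.mem_univ _), Finset.card_univ,
            Fintype.card_fin]
      _ ≤ _ := Finset.card_le_card hsub
  have hSuniv : (symmDiff S.1 VW.1).card = n - S.1.card := by
    have he : symmDiff S.1 VW.1 = S.1ᶜ := by
      ext x
      simp [hVW, Finset.mem_symmDiff, Finset.mem_compl]
    rw [he, Finset.card_compl, hcard]
  have hkey : n - 1 ≤ n - S.1.card := by
    calc n - 1 ≤ (symmDiff t.1 A).card := hlow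
      _ = (symmDiff (φ S).1 (φ VW).1).card := by rw [hφS]
      _ ≤ (symmDiff S.1 VW.1).card := hmap
      _ = n - S.1.card := hSuniv
  have hSpos : 1 ≤ S.1.card := Finset.card_pos.mpr (zfs_nonempty S.2)
  have hSle : S.1.card ≤ n := by
    rw [← hcard]; exact Finset.card_le_univ _
  have hS1 : S.1.card = 1 := by omega
  obtain ⟨v, hv⟩ := Finset.card_eq_one.mp hS1
  have hvz : IsZeroForcingSet G {v} := hv ▸ S.2
  exact path_of_singleton_zfs G n hcard v hvz
end
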